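/- Let B be a finite-dimensional algebra and M an indecomposable non-projective module with Ext¹_B(M,P)=0 for every projective module P. If P(x) is a direct summand of the projective cover of M, then Ext¹_B(M, rad P(x)) ≠ 0. -/

import Mathlib

open CategoryTheory

/-- There exists a nonsplit short exact sequence `0 → N → E → M → 0`;
equivalently, `Ext¹_B(M, N) ≠ 0`. -/
def HasNonsplitExt (B : Type) [Ring B] (N M : Type) [AddCommGroup N] [Module B N]
    [AddCommGroup M] [Module B M] : Prop :=
  ∃ (E : ModuleCat.{0} B) (ι : N →ₗ[B] E) (π : E →ₗ[B] M),
    Function.Injective ι ∧ Function.Surjective π ∧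
      LinearMap.range ι = LinearMap.ker π ∧
      ¬ ∃ σ : M →ₗ[B] E, π.comp σ = LinearMap.id

/-- `M` is an indecomposable module: it is nonzero and is not the direct sum of two
nonzero submodules. -/
def IsIndecomposableModule (B M : Type) [Ring B] [AddCommGroup M] [Module B M] : Prop :=
  Nontrivial M ∧ ∀ N₁ N₂ : Submodule B M, IsCompl N₁ N₂ → N₁ = ⊥ ∨ N₂ = ⊥

/-- The radical `rad M = (rad B)·M` of a module `M` over a finite-dimensional
algebra `B`, where `rad B` is the Jacobson radical of `B`. -/
def radM (B M : Type) [Ring B] [AddCommGroup M] [Module B M] : Submodule B M :=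
  Submodule.span B {x : M | ∃ r ∈ Ideal.jacobson (⊥ : Ideal B), ∃ m : M, x = r • m}

section Aux

variable {B : Type} [Ring B]

/-- Elements of the Jacobson radical annihilate simple modules. -/
lemma jacobson_smul_eq_zero_of_simple {S : Type} [AddCommGroup S] [Module B S]
    [IsSimpleModule B S] {r : B} (hr : r ∈ Ideal.jacobson (⊥ : Ideal B)) (s : S) :
    r • s = 0 := by
  rcases eq_or_ne s 0 with rfl | hs
  · simp
  · -- the map `b ↦ b • s` is surjective with maximal kernel
    have hsp : (Submodule.span B {s}) = ⊤ := by
      rcases eq_bot_or_eq_top (Submodule.span B {s}) with h | h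
      · exact absurd (h ▸ Submodule.mem_span_singleton_self s) (by simp [hs])
      · exact h
    have hsurj : Function.Surjective (LinearMap.toSpanSingleton B S s) := by
      rw [← LinearMap.range_eq_top, ← LinearMap.span_singleton_eq_range]
      exact hsp
    have hco : IsCoatom (LinearMap.ker (LinearMap.toSpanSingleton B S s)) :=
      LinearMap.isCoatom_ker_of_surjective hsurj
    have hmem : r ∈ LinearMap.ker (LinearMap.toSpanSingleton B S s) := by
      have : LinearMap.ker (LinearMap.toSpanSingleton B S s) ∈
          {J : Ideal B | (⊥ : Ideal B) ≤ J ∧ J.IsMaximal} :=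
        ⟨bot_le, Ideal.isMaximal_def.mpr hco⟩
      exact (Submodule.mem_sInf.mp hr) _ this
    simpa using hmem

/-- The radical of a module is contained in every maximal submodule. -/
lemma radM_le_coatom {X : Type} [AddCommGroup X] [Module B X] {m : Submodule B X}
    (hm : IsCoatom m) : radM B X ≤ m := by
  rw [radM, Submodule.span_le]
  rintro _ ⟨r, hr, x, rfl⟩
  have : IsSimpleModule B (X ⧸ m) := isSimpleModule_iff_isCoatom.mpr hm
  have h0 : r • (Submodule.Quotient.mk x : X ⧸ m) = 0 :=
    jacobson_smul_eq_zero_of_simple hr _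
  rwa [← Submodule.Quotient.mk_smul, Submodule.Quotient.mk_eq_zero] at h0

/-- Noncommutative Nakayama: the radical of a Noetherian module is superfluous. -/
lemma sup_radM_eq_top {X : Type} [AddCommGroup X] [Module B X] [IsNoetherian B X]
    {W : Submodule B X} (h : W ⊔ radM B X = ⊤) : W = ⊤ := by
  by_contra hW
  obtain ⟨m, ⟨hWm, hm⟩, hmax⟩ := set_has_maximal_iff_noetherian.mpr ‹IsNoetherian B X›
    {N : Submodule B X | W ≤ N ∧ N ≠ ⊤} ⟨W, le_rfl, hW⟩
  have hco : IsCoatom m := by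
    constructor
    · exact hm
    · intro N hN
      by_contra hN'
      exact hmax N ⟨hWm.trans hN.le, hN'⟩ hN
  have hr := radM_le_coatom (B := B) hco
  have : (⊤ : Submodule B X) ≤ m := h ▸ sup_le hWm hr
  exact hco.1 (top_le_iff.mp this)

/-- Linear maps send the radical into the radical. -/
lemma map_radM_le {X Y : Type} [AddCommGroup X] [Module B X] [AddCommGroup Y] [Module B Y]
    (f : X →ₗ[B] Y) : Submodule.map f (radM B X) ≤ radM B Y := by
  rw [radM, Submodule.map_span, Submodule.span_le]
  rintro _ ⟨_, ⟨r, hr, x, rfl⟩, rfl⟩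
  exact Submodule.subset_span ⟨r, hr, f x, by rw [map_smul]⟩

/-- Descend a linear map along a surjection whose kernel it kills. -/
noncomputable def descend {A C D : Type}
    [AddCommGroup A] [Module B A] [AddCommGroup C] [Module B C] [AddCommGroup D] [Module B D]
    (u : A →ₗ[B] C) (hu : Function.Surjective u) (g : A →ₗ[B] D)
    (hle : LinearMap.ker u ≤ LinearMap.ker g) : C →ₗ[B] D :=
  ((LinearMap.ker u).liftQ g hle).comp (u.quotKerEquivOfSurjective hu).symm.toLinearMap

lemma descend_apply {A C D : Type}
    [AddCommGroup A] [Module B A] [AddCommGroup C] [Module B C] [AddCommGroup D] [Module B D]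
    (u : A →ₗ[B] C) (hu : Function.Surjective u) (g : A →ₗ[B] D)
    (hle : LinearMap.ker u ≤ LinearMap.ker g) (a : A) :
    descend u hu g hle (u a) = g a := by
  have h1 : (u.quotKerEquivOfSurjective hu) (Submodule.Quotient.mk a) = u a := rfl
  have h2 : (u.quotKerEquivOfSurjective hu).symm (u a) = Submodule.Quotient.mk a :=
    (LinearEquiv.symm_apply_eq _).mpr h1.symm
  simp only [descend, LinearMap.comp_apply, LinearEquiv.coe_coe, h2]
  exact Submodule.liftQ_apply _ _ _

lemma descend_surjective {A C D : Type}
    [AddCommGroup A] [Module B A] [AddCommGroup C] [Module B C] [AddCommGroup D] [Module B D]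
    (u : A →ₗ[B] C) (hu : Function.Surjective u) (g : A →ₗ[B] D)
    (hle : LinearMap.ker u ≤ LinearMap.ker g) (hg : Function.Surjective g) :
    Function.Surjective (descend u hu g hle) := by
  intro d
  obtain ⟨a, rfl⟩ := hg d
  exact ⟨u a, descend_apply u hu g hle a⟩

/-- A finite product of semisimple modules is semisimple. -/
lemma isSemisimpleModule_pi {ι : Type} [Fintype ι] (N : ι → Type)
    [∀ i, AddCommGroup (N i)] [∀ i, Module B (N i)] [∀ i, IsSemisimpleModule B (N i)] :
    IsSemisimpleModule B (∀ i, N i) := by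
  classical
  refine isSemisimpleModule_of_isSemisimpleModule_submodule'
    (p := fun i => LinearMap.range (LinearMap.single B N i)) (fun i => ?_)
    (LinearMap.iSup_range_single B N)
  exact IsSemisimpleModule.congr
    (LinearEquiv.ofInjective (LinearMap.single B N i) (Pi.single_injective (M := N) i)).symm

/-- Over a left-Artinian ring, the quotient of the ring by its Jacobson radical is a
semisimple module. -/
lemma isSemisimpleModule_quotient_jacobson [IsArtinian B B] :
    IsSemisimpleModule B (B ⧸ (Ideal.jacobson (⊥ : Ideal B))) := by
  classical
  -- the Jacobson radical is a finite intersection of maximal left ideals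
  obtain ⟨s, hs, hJ⟩ : ∃ s : Finset (Ideal B), (∀ m ∈ s, IsCoatom m) ∧
      Ideal.jacobson (⊥ : Ideal B) = s.inf id := by
    obtain ⟨I₀, ⟨s, hs, rfl⟩, hmin⟩ := set_has_minimal_iff_artinian.mpr ‹IsArtinian B B›
      {I : Ideal B | ∃ s : Finset (Ideal B), (∀ m ∈ s, IsCoatom m) ∧ I = s.inf id}
      ⟨⊤, ∅, by simp, by simp⟩
    refine ⟨s, hs, le_antisymm ?_ ?_⟩
    · exact Finset.le_inf fun m hm => sInf_le ⟨bot_le, Ideal.isMaximal_def.mpr (hs m hm)⟩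
    · -- the finite inf is contained in every maximal ideal
      refine le_sInf ?_
      rintro m ⟨-, hm⟩
      have hmco : IsCoatom m := Ideal.isMaximal_def.mp hm
      have hmem : (insert m s).inf id ∈
          {I : Ideal B | ∃ s : Finset (Ideal B), (∀ m ∈ s, IsCoatom m) ∧ I = s.inf id} :=
        ⟨insert m s, fun x hx => by
          rcases Finset.mem_insert.mp hx with rfl | hx
          · exact hmco
          · exact hs x hx, rfl⟩
      have hle : (insert m s).inf id ≤ s.inf id := Finset.inf_mono (Finset.subset_insert m s)
      have : ¬ (insert m s).inf id < s.inf id := hmin _ hmem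
      have heq : (insert m s).inf id = s.inf id := le_antisymm hle (by
        by_contra h
        exact this (lt_of_le_of_ne hle (fun hh => h hh.ge)))
      calc s.inf id = (insert m s).inf id := heq.symm
        _ ≤ id m := Finset.inf_le (Finset.mem_insert_self m s)
  -- embed `B ⧸ J` into the product of the `B ⧸ m`
  let φ : B →ₗ[B] ∀ m : s, B ⧸ (m : Ideal B) :=
    LinearMap.pi fun m => Submodule.mkQ (m : Ideal B)
  have hker : LinearMap.ker φ = Ideal.jacobson (⊥ : Ideal B) := by
    ext x
    rw [hJ, LinearMap.ker_pi]
    simp only [Submodule.ker_mkQ, Submodule.mem_iInf, Submodule.mem_finsetInf, id,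
      Subtype.forall]
  haveI : ∀ m : s, IsSimpleModule B (B ⧸ (m : Ideal B)) := fun m =>
    isSimpleModule_iff_isCoatom.mpr (hs m m.2)
  haveI : IsSemisimpleModule B (∀ m : s, B ⧸ (m : Ideal B)) :=
    isSemisimpleModule_pi _
  haveI := IsSemisimpleModule.submodule (R := B) (M := ∀ m : s, B ⧸ (m : Ideal B)) (m := LinearMap.range φ)
  have e := φ.quotKerEquivRange
  rw [hker] at e
  exact IsSemisimpleModule.congr (M := ↥(LinearMap.range φ)) e

/-- The quotient of a finitely generated module by its radical is semisimple. -/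
lemma isSemisimpleModule_quotient_radM [IsArtinian B B] {X : Type} [AddCommGroup X]
    [Module B X] (hfg : (⊤ : Submodule B X).FG) :
    IsSemisimpleModule B (X ⧸ radM B X) := by
  classical
  obtain ⟨t, ht⟩ := hfg
  -- index the generators
  let n := t.card
  let y : Fin n → X := fun i => (t.equivFin.symm i : X)
  have hy : Submodule.span B (Set.range y) = ⊤ := by
    rw [← ht]
    congr 1
    ext x
    constructor
    · rintro ⟨i, rfl⟩; exact (t.equivFin.symm i).2
    · intro hx; exact ⟨t.equivFin ⟨x, hx⟩, by simp [y]⟩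
  -- the combination map onto X ⧸ rad X
  let θ₀ : (Fin n → B) →ₗ[B] X :=
    ∑ i, (LinearMap.toSpanSingleton B X (y i)).comp (LinearMap.proj i)
  have hθ₀apply : ∀ v, θ₀ v = ∑ i, v i • y i := by
    intro v
    simp [θ₀, LinearMap.sum_apply, LinearMap.toSpanSingleton_apply]
  have hθ₀ : Function.Surjective θ₀ := by
    rw [← LinearMap.range_eq_top, eq_top_iff, ← hy]
    refine Submodule.span_le.mpr ?_
    rintro _ ⟨i, rfl⟩
    refine ⟨Pi.single i (1 : B), ?_⟩
    rw [hθ₀apply]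
    rw [Finset.sum_eq_single i (fun j _ hj => by simp [Pi.single_apply, hj]) (by simp)]
    simp
  let θ : (Fin n → B) →ₗ[B] X ⧸ radM B X := (radM B X).mkQ.comp θ₀
  have hθ : Function.Surjective θ :=
    (Submodule.mkQ_surjective _).comp hθ₀
  -- the coordinatewise quotient map
  let J := Ideal.jacobson (⊥ : Ideal B)
  let ψ : (Fin n → B) →ₗ[B] (Fin n → B ⧸ J) :=
    LinearMap.pi fun i => (Submodule.mkQ J).comp (LinearMap.proj i)
  have hψ : Function.Surjective ψ := by
    intro v
    choose w hw using fun i => Submodule.mkQ_surjective J (v i)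
    exact ⟨w, funext hw⟩
  have hle : LinearMap.ker ψ ≤ LinearMap.ker θ := by
    intro v hv
    have hv' : ∀ i, v i ∈ J := by
      intro i
      have := congrFun (LinearMap.mem_ker.mp hv) i
      simpa [ψ, Submodule.Quotient.mk_eq_zero, Ideal.Quotient.eq_zero_iff_mem] using this
    have : θ₀ v ∈ radM B X := by
      rw [hθ₀apply]
      exact Submodule.sum_mem _ fun i _ =>
        Submodule.subset_span ⟨v i, hv' i, y i, rfl⟩
    simpa [θ, Submodule.Quotient.mk_eq_zero] using this
  -- descend to a surjection from the semisimple module `(Fin n → B ⧸ J)`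
  let χ := descend ψ hψ θ hle
  have hχ : Function.Surjective χ := descend_surjective ψ hψ θ hle hθ
  haveI : IsSemisimpleModule B (B ⧸ J) := isSemisimpleModule_quotient_jacobson
  haveI : IsSemisimpleModule B (Fin n → B ⧸ J) := isSemisimpleModule_pi _
  exact IsSemisimpleModule.congr (χ.quotKerEquivOfSurjective hχ).symm

end Aux

/-- Let `B` be a finite-dimensional (basic) algebra over an algebraically closed field
and `M` an indecomposable non-projective `B`-module with `Ext¹_B(M,P) = 0` for every
projective module `P` (i.e. every short exact sequence `0 → P → E → M → 0` with `P`
projective splits).  Let `p : P₀ → M` be a projective cover of `M`.  If the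
indecomposable projective `P(x) = Px` is a direct summand of `P₀`, then
`Ext¹_B(M, rad P(x)) ≠ 0`. -/
theorem summand_of_cover_implies_ext_rad_nonzero
    (𝕜 B : Type) [Field 𝕜] [IsAlgClosed 𝕜] [Ring B] [Algebra 𝕜 B]
    [FiniteDimensional 𝕜 B]
    (M : Type) [AddCommGroup M] [Module B M] [Module.Finite B M]
    (hind : IsIndecomposableModule B M)
    (hnonproj : ¬ Module.Projective B M)
    (hext : ∀ P : ModuleCat.{0} B, Module.Projective B P → ¬ HasNonsplitExt B P M)
    (P₀ : Type) [AddCommGroup P₀] [Module B P₀]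
    (hP₀ : Module.Projective B P₀)
    (p : P₀ →ₗ[B] M) (hp : Function.Surjective p)
    (hmin₀ : ∀ N : Submodule B P₀, N ⊔ LinearMap.ker p = ⊤ → N = ⊤)
    (Px : Type) [AddCommGroup Px] [Module B Px]
    (hPx : Module.Projective B Px) (hPxind : IsIndecomposableModule B Px)
    (hsummand : ∃ N N' : Submodule B P₀, IsCompl N N' ∧ Nonempty (↥N ≃ₗ[B] Px)) :
    HasNonsplitExt B (↥(radM B Px)) M := by
  classical
  obtain ⟨N, N', hc, ⟨e⟩⟩ := hsummand
  haveI hMnt : Nontrivial M := hind.1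
  -- `B` is nontrivial, Artinian and Noetherian
  haveI : Nontrivial B := by
    by_contra h
    rw [not_nontrivial_iff_subsingleton] at h
    haveI := Module.subsingleton B M
    exact not_subsingleton_iff_nontrivial.mpr hMnt inferInstance
  haveI : IsArtinian 𝕜 B := inferInstance
  haveI hArt : IsArtinian B B := isArtinian_of_tower 𝕜 inferInstance
  haveI : IsNoetherian 𝕜 B := inferInstance
  haveI hNoe : IsNoetherian B B := isNoetherian_of_tower 𝕜 inferInstance
  -- `P₀` is finitely generated
  haveI hP₀fin : Module.Finite B P₀ := by
    obtain ⟨t, ht⟩ := Module.finite_def.mp (inferInstance : Module.Finite B M)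
    let sec : M → P₀ := Function.surjInv hp
    refine ⟨⟨t.image sec, ?_⟩⟩
    apply hmin₀
    rw [eq_top_iff]
    intro x _
    have hx : p x ∈ Submodule.map p (Submodule.span B (↑(t.image sec))) := by
      rw [Submodule.map_span]
      have : (↑t : Set M) ⊆ p '' ↑(t.image sec) := by
        intro m hm
        exact ⟨sec m, by simp [Finset.mem_image]; exact ⟨m, hm, rfl⟩,
          Function.surjInv_eq hp m⟩
      have h2 : p x ∈ Submodule.span B (↑t : Set M) := by rw [ht]; trivial
      exact Submodule.span_mono this h2
    obtain ⟨w, hw, hwx⟩ := hx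
    have : x - w ∈ LinearMap.ker p := by
      simp [LinearMap.mem_ker, map_sub, hwx]
    have hx' : x = w + (x - w) := by abel
    rw [hx']
    exact Submodule.add_mem_sup hw this
  haveI : IsNoetherian B P₀ := isNoetherian_of_isNoetherianRing_of_finite B P₀
  -- `Px` is finitely generated and Noetherian
  haveI : Module.Finite B N := ⟨IsNoetherian.noetherian ⊤⟩
  haveI hPxfin : Module.Finite B Px := Module.Finite.equiv e
  haveI : IsNoetherian B Px := isNoetherian_of_isNoetherianRing_of_finite B Px
  haveI hPxnt : Nontrivial Px := hPxind.1
  -- the projection onto the summand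
  let q : P₀ →ₗ[B] Px := e.toLinearMap.comp (N.projectionOnto N' hc)
  have hq : Function.Surjective q := by
    intro z
    refine ⟨(e.symm z : P₀), ?_⟩
    simp only [q, LinearMap.comp_apply, LinearEquiv.coe_coe]
    rw [Submodule.projectionOnto_apply_left hc (e.symm z)]
    simp
  -- the kernel of the cover is contained in the radical of `P₀`
  have hkerrad : LinearMap.ker p ≤ radM B P₀ := by
    haveI hss : IsSemisimpleModule B (P₀ ⧸ radM B P₀) :=
      isSemisimpleModule_quotient_radM (Module.finite_def.mp inferInstance)
    set mk : P₀ →ₗ[B] P₀ ⧸ radM B P₀ := (radM B P₀).mkQ with hmk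
    set K : Submodule B (P₀ ⧸ radM B P₀) := Submodule.map mk (LinearMap.ker p) with hK
    obtain ⟨C, hC⟩ := exists_isCompl K
    have hN : Submodule.comap mk C ⊔ LinearMap.ker p = ⊤ := by
      rw [eq_top_iff]
      intro a _
      have : mk a ∈ K ⊔ C := by rw [hC.sup_eq_top]; trivial
      obtain ⟨k, hk, c, hcmem, hkc⟩ := Submodule.mem_sup.mp this
      obtain ⟨w, hw, rfl⟩ := hk
      have : a - w ∈ Submodule.comap mk C := by
        simp only [Submodule.mem_comap, map_sub]
        have h3 : mk a - mk w = c := by rw [← hkc]; abel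
        rw [h3]; exact hcmem
      have ha : a = (a - w) + w := by abel
      rw [ha]
      exact Submodule.add_mem_sup this hw
    have hC' : Submodule.comap mk C = ⊤ := hmin₀ _ hN
    have hCt : C = ⊤ := by
      rw [eq_top_iff]
      intro z _
      obtain ⟨a, rfl⟩ := Submodule.mkQ_surjective (radM B P₀) z
      have : a ∈ Submodule.comap mk C := hC' ▸ trivial
      exact this
    have hKbot : K = ⊥ := by
      have := hC.inf_eq_bot
      rw [hCt, inf_top_eq] at this
      exact this
    intro x hx
    have : mk x ∈ K := ⟨x, hx, rfl⟩
    rw [hKbot] at this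
    simpa [mk, Submodule.Quotient.mk_eq_zero] using this
  -- the induced surjection `f : M → Px ⧸ rad Px`
  set mkr : Px →ₗ[B] Px ⧸ radM B Px := (radM B Px).mkQ with hmkr
  have hlef : LinearMap.ker p ≤ LinearMap.ker (mkr.comp q) := by
    intro x hx
    have h1 : q x ∈ radM B Px := map_radM_le q ⟨x, hkerrad hx, rfl⟩
    simpa [LinearMap.mem_ker, mkr, Submodule.Quotient.mk_eq_zero] using h1
  let f : M →ₗ[B] Px ⧸ radM B Px := descend p hp (mkr.comp q) hlef
  have hf : ∀ a : P₀, f (p a) = mkr (q a) := fun a => descend_apply p hp _ hlef a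
  have hfsurj : Function.Surjective f := by
    intro z
    obtain ⟨y, rfl⟩ := Submodule.mkQ_surjective (radM B Px) z
    obtain ⟨a, rfl⟩ := hq y
    exact ⟨p a, hf a⟩
  -- the pullback extension
  let E : Submodule B (Px × M) :=
    LinearMap.ker (mkr.comp (LinearMap.fst B Px M) - f.comp (LinearMap.snd B Px M))
  have hmemE : ∀ z : Px × M, z ∈ E ↔ mkr z.1 = f z.2 := by
    intro z
    simp [E, LinearMap.mem_ker, sub_eq_zero]
  let ι : (radM B Px) →ₗ[B] E :=
    LinearMap.codRestrict E ((LinearMap.inl B Px M).comp (radM B Px).subtype)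
      (fun x => by
        rw [hmemE]
        simp [mkr, Submodule.Quotient.mk_eq_zero, x.2])
  let π : E →ₗ[B] M := (LinearMap.snd B Px M).comp E.subtype
  refine ⟨ModuleCat.of B E, ι, π, ?_, ?_, ?_, ?_⟩
  · -- injectivity of ι
    intro x y hxy
    have : (x : Px) = (y : Px) := congrArg (fun z : E => (z : Px × M).1) hxy
    exact Subtype.ext this
  · -- surjectivity of π
    intro m
    obtain ⟨a, ha⟩ := Submodule.mkQ_surjective (radM B Px) (f m)
    exact ⟨⟨(a, m), (hmemE (a, m)).mpr ha⟩, rfl⟩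
  · -- exactness
    apply le_antisymm
    · rintro _ ⟨x, rfl⟩
      simp only [LinearMap.mem_ker]
      rfl
    · rintro ⟨⟨a, m⟩, hz⟩ hzker
      have hm : m = 0 := hzker
      subst hm
      have ha : mkr a = 0 := by
        have := (hmemE (a, 0)).mp hz
        simpa using this
      have haa : a ∈ radM B Px := by
        simpa [mkr, Submodule.Quotient.mk_eq_zero] using ha
      exact ⟨⟨a, haa⟩, rfl⟩
  · -- the extension does not split
    rintro ⟨σ, hσ⟩
    set g : M →ₗ[B] Px := (LinearMap.fst B Px M).comp (E.subtype.comp σ) with hg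
    have hgf : ∀ m : M, mkr (g m) = f m := by
      intro m
      set z : ↥E := σ m with hzdef
      have h1 : (z : Px × M).2 = m := by
        have := congrArg (fun τ : M →ₗ[B] M => τ m) hσ
        simpa [π] using this
      have h2 := (hmemE (z : Px × M)).mp z.2
      rw [h1] at h2
      exact h2
    -- `g` is surjective by Nakayama
    have hgsurj : Function.Surjective g := by
      have hsup : LinearMap.range g ⊔ radM B Px = ⊤ := by
        rw [eq_top_iff]
        intro x _
        obtain ⟨m, hm⟩ := hfsurj (mkr x)
        rw [← hgf m] at hm
        have : x - g m ∈ radM B Px := by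
          rw [← Submodule.Quotient.mk_eq_zero (radM B Px)]
          show mkr (x - g m) = 0
          rw [map_sub, hm, sub_self]
        have hx : x = g m + (x - g m) := by abel
        rw [hx]
        exact Submodule.add_mem_sup (LinearMap.mem_range_self g m) this
      have := sup_radM_eq_top hsup
      rwa [← LinearMap.range_eq_top]
    -- split `g` using projectivity of `Px`
    obtain ⟨s, hs⟩ := Module.projective_lifting_property g LinearMap.id hgsurj
    have hsg : ∀ z : Px, g (s z) = z := fun z => congrArg (fun τ : Px →ₗ[B] Px => τ z) hs
    have hcompl : IsCompl (LinearMap.range s) (LinearMap.ker g) := by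
      constructor
      · rw [disjoint_iff_inf_le]
        rintro x ⟨⟨z, rfl⟩, hxker⟩
        have : z = 0 := by rw [← hsg z]; exact hxker
        simp [this]
      · rw [codisjoint_iff_le_sup]
        intro m _
        have h1 : m - s (g m) ∈ LinearMap.ker g := by
          simp [LinearMap.mem_ker, map_sub, hsg]
        have hm : m = s (g m) + (m - s (g m)) := by abel
        rw [hm]
        exact Submodule.add_mem_sup (LinearMap.mem_range_self s _) h1
    rcases hind.2 _ _ hcompl with h1 | h2
    · -- the range of `s` cannot be trivial
      obtain ⟨z, hz⟩ := exists_ne (0 : Px)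
      have : s z ∈ LinearMap.range s := LinearMap.mem_range_self s z
      rw [h1] at this
      have hz0 : s z = 0 := this
      have : z = 0 := by rw [← hsg z, hz0, map_zero]
      exact hz this
    · -- otherwise `g` is an isomorphism and `M` is projective
      have hginj : Function.Injective g := by
        rw [← LinearMap.ker_eq_bot]; exact h2
      exact hnonproj (Module.Projective.of_equiv
        (LinearEquiv.ofBijective g ⟨hginj, hgsurj⟩).symm)
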